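/- (Subdifferential of the anisotropy functional, smooth case.) Let Ω ⊂ ℝ² be a measurable set of finite Lebesgue measure, and let γ̃ : ℝ² → [0, ∞) be convex and continuously differentiable with |∇γ̃(x)| ≤ L for all x ∈ ℝ². Define Φ(w) := ∫_Ω γ̃(w(x)) dx for w ∈ L²(Ω; ℝ²) (finite, by the linear growth of γ̃). Then for w, v ∈ L²(Ω; ℝ²), the subgradient inequality ∫_Ω v(x) · (u(x) − w(x)) dx ≤ Φ(u) − Φ(w) for all u ∈ L²(Ω; ℝ²) holds if and only if v(x) = ∇γ̃(w(x)) for a.e. x ∈ Ω. -/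

import Mathlib

open Real MeasureTheory RealInnerProductSpace

noncomputable abbrev E2 : Type := EuclideanSpace ℝ (Fin 2)

/-- Pointwise subgradient inequality for a convex C¹ function. -/
lemma aux_subgrad (γ : E2 → ℝ) (hγ_conv : ConvexOn ℝ Set.univ γ)
    (hγ_smooth : ContDiff ℝ 1 γ) (a b : E2) :
    ⟪gradient γ a, b - a⟫ ≤ γ b - γ a := by
  have hdiff : ∀ x : E2, DifferentiableAt ℝ γ x := fun x =>
    (hγ_smooth.differentiable one_ne_zero).differentiableAt
  set ψ : ℝ → E2 := fun t => a + t • (b - a) with hψ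
  have hψd : ∀ t : ℝ, HasDerivAt ψ (b - a) t := fun t => by
    simpa [hψ] using ((hasDerivAt_id t).smul_const (b - a)).const_add a
  have hlm : ∀ t : ℝ, (AffineMap.lineMap a b : ℝ →ᵃ[ℝ] E2) t = ψ t := by
    intro t
    simp only [AffineMap.lineMap_apply_module, hψ]
    module
  have hφconv : ConvexOn ℝ Set.univ (fun t => γ (ψ t)) := by
    have h := hγ_conv.comp_affineMap (AffineMap.lineMap a b : ℝ →ᵃ[ℝ] E2)
    rw [Set.preimage_univ] at h
    have : (γ ∘ (AffineMap.lineMap a b : ℝ →ᵃ[ℝ] E2)) = fun t => γ (ψ t) := by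
      funext t; simp [Function.comp, hlm t]
    rwa [this] at h
  have hφd : HasDerivAt (fun t => γ (ψ t)) ((fderiv ℝ γ a) (b - a)) 0 := by
    have h0 : ψ 0 = a := by simp [hψ]
    have := ((hdiff (ψ 0)).hasFDerivAt.comp_hasDerivAt 0 (hψd 0))
    rw [h0] at this
    exact this
  have key := hφconv.le_slope_of_hasDerivAt (Set.mem_univ (0:ℝ)) (Set.mem_univ (1:ℝ))
    one_pos hφd
  have hslope : slope (fun t => γ (ψ t)) 0 1 = γ b - γ a := by
    have h1 : ψ 1 = b := by simp [hψ]
    have h0 : ψ 0 = a := by simp [hψ]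
    simp [slope_def_field, h0, h1]
  have hinner : ⟪gradient γ a, b - a⟫ = (fderiv ℝ γ a) (b - a) := by
    simpa [gradient] using
      (InnerProductSpace.toDual_symm_apply (𝕜 := ℝ) (E := E2)
        (x := b - a) (y := fderiv ℝ γ a))
  rw [hinner]
  calc (fderiv ℝ γ a) (b - a) ≤ slope (fun t => γ (ψ t)) 0 1 := key
    _ = γ b - γ a := hslope

theorem stmt15 (Ω : Set E2) (hΩ : MeasurableSet Ω) (hΩfin : volume Ω ≠ ⊤)
    (γ : E2 → ℝ) (L : ℝ)
    (hγ_nonneg : ∀ x, 0 ≤ γ x) (hγ_conv : ConvexOn ℝ Set.univ γ)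
    (hγ_smooth : ContDiff ℝ 1 γ) (hL : ∀ x : E2, ‖gradient γ x‖ ≤ L)
    (w v : E2 → E2)
    (hw : MemLp w 2 (volume.restrict Ω)) (hv : MemLp v 2 (volume.restrict Ω)) :
    (∀ u : E2 → E2, MemLp u 2 (volume.restrict Ω) →
        ∫ x in Ω, ⟪v x, u x - w x⟫ ≤ (∫ x in Ω, γ (u x)) - ∫ x in Ω, γ (w x))
      ↔ ∀ᵐ x ∂volume.restrict Ω, v x = gradient γ (w x) := by
  set μ := volume.restrict Ω with hμ
  haveI : IsFiniteMeasure μ := by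
    constructor
    rw [hμ, Measure.restrict_apply_univ]
    exact lt_top_iff_ne_top.mpr hΩfin
  have hγcont : Continuous γ := hγ_smooth.continuous
  have hdiff : ∀ x : E2, DifferentiableAt ℝ γ x := fun x =>
    (hγ_smooth.differentiable one_ne_zero).differentiableAt
  -- norm of fderiv equals norm of gradient
  have hfn : ∀ x : E2, ‖fderiv ℝ γ x‖ = ‖gradient γ x‖ := by
    intro x
    rw [gradient, LinearIsometryEquiv.norm_map]
  -- Lipschitz bound
  have hLip : ∀ a b : E2, ‖γ b - γ a‖ ≤ L * ‖b - a‖ := by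
    intro a b
    refine convex_univ.norm_image_sub_le_of_norm_fderiv_le
      (fun x _ => hdiff x) (fun x _ => ?_) (Set.mem_univ a) (Set.mem_univ b)
    rw [hfn x]; exact hL x
  -- growth
  have hgrowth : ∀ y : E2, ‖γ y‖ ≤ γ 0 + L * ‖y‖ := by
    intro y
    have h := hLip 0 y
    rw [Real.norm_eq_abs] at *
    have := abs_le.mp (by simpa using h)
    have h2 : γ y - γ 0 ≤ L * ‖y‖ := by
      have := (abs_le.mp (by simpa using hLip 0 y)).2
      simpa using this
    rw [abs_of_nonneg (hγ_nonneg y)]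
    linarith
  -- gradient is continuous
  have hgradcont : Continuous (fun x : E2 => gradient γ x) := by
    have h1 : Continuous (fderiv ℝ γ) := hγ_smooth.continuous_fderiv one_ne_zero
    exact ((InnerProductSpace.toDual ℝ E2).symm.continuous).comp h1
  -- integrability of γ ∘ u for u ∈ L²
  have hint : ∀ u : E2 → E2, MemLp u 2 μ → Integrable (fun x => γ (u x)) μ := by
    intro u hu
    have hnu : Integrable (fun x => ‖u x‖) μ :=
      (memLp_one_iff_integrable.mp
        (hu.mono_exponent (by norm_num))).norm
    refine Integrable.mono' (g := fun x => γ 0 + L * ‖u x‖)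
      ((integrable_const (γ 0)).add (hnu.const_mul L))
      (hγcont.comp_aestronglyMeasurable hu.aestronglyMeasurable)
      (Filter.Eventually.of_forall fun x => hgrowth (u x))
  -- integrability of inner products of L² functions
  have hinner_int : ∀ f g : E2 → E2, MemLp f 2 μ → MemLp g 2 μ →
      Integrable (fun x => ⟪f x, g x⟫) μ := by
    intro f g hf hg
    have h := MeasureTheory.L2.integrable_inner (𝕜 := ℝ) (hf.toLp f) (hg.toLp g)
    refine h.congr ?_
    filter_upwards [hf.coeFn_toLp, hg.coeFn_toLp] with x h1 h2
    rw [h1, h2]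
  -- the gradient composed with an L² function is in L²
  have hgradL2 : ∀ f : E2 → E2, MemLp f 2 μ →
      MemLp (fun x => gradient γ (f x)) 2 μ := by
    intro f hf
    refine MemLp.of_bound (hgradcont.comp_aestronglyMeasurable hf.aestronglyMeasurable) L
      (Filter.Eventually.of_forall fun x => hL (f x))
  constructor
  · -- forward direction
    intro H
    set g : E2 → E2 := fun x => gradient γ (w x) with hg
    have hgmem : MemLp g 2 μ := hgradL2 w hw
    set z : E2 → E2 := fun x => v x - g x with hz
    have hzmem : MemLp z 2 μ := hv.sub hgmem
    have hnz : Integrable (fun x => ‖z x‖) μ :=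
      (memLp_one_iff_integrable.mp (hzmem.mono_exponent (by norm_num))).norm
    -- key inequality for each t = 1/(n+1)
    have hkey : ∀ n : ℕ,
        ∫ x, ⟪v x, z x⟫ ∂μ ≤
          ∫ x, ⟪gradient γ (w x + ((1:ℝ)/(n+1)) • z x), z x⟫ ∂μ := by
      intro n
      set t : ℝ := (1:ℝ)/(n+1) with ht
      have htpos : 0 < t := by positivity
      set u : E2 → E2 := fun x => w x + t • z x with hu
      have humem : MemLp u 2 μ := hw.add (hzmem.const_smul t)
      have h1 := H u humem
      -- u x - w x = t • z x
      have huw : ∀ x, u x - w x = t • z x := fun x => by simp [hu]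
      -- upper bound: γ (u x) - γ (w x) ≤ t * ⟪gradient γ (u x), z x⟫
      have hub : ∀ x, γ (u x) - γ (w x) ≤ t * ⟪gradient γ (u x), z x⟫ := by
        intro x
        have := aux_subgrad γ hγ_conv hγ_smooth (u x) (w x)
        have h2 : ⟪gradient γ (u x), w x - u x⟫ = -(t * ⟪gradient γ (u x), z x⟫) := by
          have : w x - u x = -(t • z x) := by
            simp only [hu]; abel
          rw [this, inner_neg_right, real_inner_smul_right]
        rw [h2] at this
        linarith
      have hGint : Integrable (fun x => ⟪gradient γ (u x), z x⟫) μ :=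
        hinner_int _ _ (hgradL2 u humem) hzmem
      have h3 : (∫ x, γ (u x) ∂μ) - ∫ x, γ (w x) ∂μ ≤
          t * ∫ x, ⟪gradient γ (u x), z x⟫ ∂μ := by
        rw [← integral_sub (hint u humem) (hint w hw), ← integral_const_mul]
        exact integral_mono_ae ((hint u humem).sub (hint w hw)) (hGint.const_mul t)
          (Filter.Eventually.of_forall hub)
      have h4 : ∫ x, ⟪v x, u x - w x⟫ ∂μ = t * ∫ x, ⟪v x, z x⟫ ∂μ := by
        rw [← integral_const_mul]
        congr 1
        funext x
        rw [huw x, real_inner_smul_right]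
      rw [h4] at h1
      have h5 : t * ∫ x, ⟪v x, z x⟫ ∂μ ≤ t * ∫ x, ⟪gradient γ (u x), z x⟫ ∂μ :=
        le_trans h1 h3
      exact le_of_mul_le_mul_left (by simpa [mul_comm] using h5) htpos
    -- pass to the limit n → ∞
    have htend : Filter.Tendsto
        (fun n : ℕ => ∫ x, ⟪gradient γ (w x + ((1:ℝ)/(n+1)) • z x), z x⟫ ∂μ)
        Filter.atTop (nhds (∫ x, ⟪g x, z x⟫ ∂μ)) := by
      refine tendsto_integral_of_dominated_convergence (fun x => L * ‖z x‖)
        (fun n => (hgradcont.comp_aestronglyMeasurable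
          (hw.aestronglyMeasurable.add
            (hzmem.aestronglyMeasurable.const_smul ((1:ℝ)/(n+1))))).inner
              hzmem.aestronglyMeasurable)
        (hnz.const_mul L) (fun n => Filter.Eventually.of_forall fun x => ?_)
        (Filter.Eventually.of_forall fun x => ?_)
      · calc ‖⟪gradient γ (w x + ((1:ℝ)/(n+1)) • z x), z x⟫‖
            ≤ ‖gradient γ (w x + ((1:ℝ)/(n+1)) • z x)‖ * ‖z x‖ := norm_inner_le_norm _ _
          _ ≤ L * ‖z x‖ := by
              apply mul_le_mul_of_nonneg_right (hL _) (norm_nonneg _)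
      · have h1 : Filter.Tendsto (fun n : ℕ => (1:ℝ)/(n+1)) Filter.atTop (nhds 0) :=
          tendsto_one_div_add_atTop_nhds_zero_nat
        have h2 : Filter.Tendsto (fun n : ℕ => w x + ((1:ℝ)/(n+1)) • z x)
            Filter.atTop (nhds (w x)) := by
          have := (h1.smul_const (z x)).const_add (w x)
          simpa using this
        exact Filter.Tendsto.inner ((hgradcont.tendsto (w x)).comp h2)
          tendsto_const_nhds
    have hle : ∫ x, ⟪v x, z x⟫ ∂μ ≤ ∫ x, ⟪g x, z x⟫ ∂μ :=
      le_of_tendsto_of_tendsto tendsto_const_nhds htend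
        (Filter.Eventually.of_forall hkey)
    -- conclude ∫ ‖z‖² ≤ 0
    have hzz : ∫ x, ⟪z x, z x⟫ ∂μ ≤ 0 := by
      have h1 : ∀ x, ⟪z x, z x⟫ = ⟪v x, z x⟫ - ⟪g x, z x⟫ := by
        intro x
        rw [hz]
        simp only [inner_sub_left]
      calc ∫ x, ⟪z x, z x⟫ ∂μ
          = (∫ x, ⟪v x, z x⟫ ∂μ) - ∫ x, ⟪g x, z x⟫ ∂μ := by
            rw [← integral_sub (hinner_int v z hv hzmem) (hinner_int g z hgmem hzmem)]
            congr 1; funext x; exact h1 x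
        _ ≤ 0 := by linarith
    have hzzint : Integrable (fun x => ⟪z x, z x⟫) μ := hinner_int z z hzmem hzmem
    have hzznn : 0 ≤ᵐ[μ] fun x => ⟪z x, z x⟫ :=
      Filter.Eventually.of_forall fun x => real_inner_self_nonneg
    have hzero : (fun x => ⟪z x, z x⟫) =ᵐ[μ] 0 := by
      have h := integral_eq_zero_iff_of_nonneg_ae hzznn hzzint
      have : ∫ x, ⟪z x, z x⟫ ∂μ = 0 :=
        le_antisymm hzz (integral_nonneg_of_ae hzznn)
      exact h.mp this
    filter_upwards [hzero] with x hx
    have : ‖z x‖ ^ 2 = 0 := by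
      rw [← real_inner_self_eq_norm_sq]
      simpa using hx
    have hzx : z x = 0 := by
      have := pow_eq_zero_iff (n := 2) (by norm_num) |>.mp this
      exact norm_eq_zero.mp this
    have : v x - g x = 0 := hzx
    have := sub_eq_zero.mp this
    simpa [hg] using this
  · -- backward direction
    intro H u hu
    have hpt : ∀ x, ⟪gradient γ (w x), u x - w x⟫ ≤ γ (u x) - γ (w x) := fun x =>
      aux_subgrad γ hγ_conv hγ_smooth (w x) (u x)
    have h1 : ∫ x, ⟪v x, u x - w x⟫ ∂μ = ∫ x, ⟪gradient γ (w x), u x - w x⟫ ∂μ := by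
      refine integral_congr_ae ?_
      filter_upwards [H] with x hx
      rw [hx]
    rw [h1]
    have h2 : ∫ x, ⟪gradient γ (w x), u x - w x⟫ ∂μ ≤
        ∫ x, (γ (u x) - γ (w x)) ∂μ :=
      integral_mono_ae (hinner_int _ _ (hgradL2 w hw) (hu.sub hw))
        ((hint u hu).sub (hint w hw)) (Filter.Eventually.of_forall hpt)
    calc ∫ x, ⟪gradient γ (w x), u x - w x⟫ ∂μ
        ≤ ∫ x, (γ (u x) - γ (w x)) ∂μ := h2
      _ = (∫ x, γ (u x) ∂μ) - ∫ x, γ (w x) ∂μ :=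
          integral_sub (hint u hu) (hint w hw)
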